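/- (Proposition 2: nonnegativity of the PMP constant.) Let f : ℝ^N × ℝ^M → ℝ^N be continuously differentiable, let S ⊆ ℝ^M be compact, let φ : ℝ^N → ℝ be continuously differentiable, let x₀ ∈ ℝ^N and t_f > 0. Suppose (x*, s*) is an optimal pair: s* : [0,t_f] → S is measurable, x* is absolutely continuous with ẋ*(t) = f(x*(t), s*(t)) a.e. and x*(0) = x₀, and for every measurable s : [0,t_f] → S and every absolutely continuous x with ẋ(t) = f(x(t), s(t)) a.e. and x(0) = x₀ one has φ(x(t_f)) ≥ φ(x*(t_f)). Suppose p : [0,t_f] → ℝ^N is absolutely continuous with ṗ(t)ᵀ = −p(t)ᵀ (∂f/∂x)(x*(t), s*(t)) a.e., p(t_f) = −∇φ(x*(t_f)), and there is a real constant λ with p(t)ᵀ f(x*(t), s*(t)) = λ for almost every t. If there exists s₀ ∈ S with f(x₀, s₀) = 0, then λ ≥ 0. -/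

import Mathlib

open MeasureTheory

noncomputable section

namespace Stmt4

set_option maxHeartbeats 1000000 in
/-- **Proposition 2** (nonnegativity of the PMP constant): if there is an admissible control
value `s₀ ∈ S` keeping the initial state fixed (`f(x₀, s₀) = 0`), then the constant value `λ`
of the PMP control Hamiltonian along an optimal trajectory is nonnegative. -/
theorem pmp_constant_nonneg {N M : ℕ}
    (f : (Fin N → ℝ) → (Fin M → ℝ) → (Fin N → ℝ))
    (hf : ContDiff ℝ 1 (fun pr : (Fin N → ℝ) × (Fin M → ℝ) => f pr.1 pr.2))
    (S : Set (Fin M → ℝ)) (hS : IsCompact S)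
    (φ : (Fin N → ℝ) → ℝ) (hφ : ContDiff ℝ 1 φ)
    (x0 : Fin N → ℝ) (tf : ℝ) (htf : 0 < tf)
    -- the optimal pair (x*, s*)
    (sstar : ℝ → (Fin M → ℝ)) (xstar : ℝ → (Fin N → ℝ))
    (hsmeas : Measurable sstar) (hsval : ∀ t ∈ Set.Icc (0 : ℝ) tf, sstar t ∈ S)
    (hx0 : xstar 0 = x0)
    (hxint : IntervalIntegrable (fun τ => f (xstar τ) (sstar τ)) volume 0 tf)
    (hxsol : ∀ t ∈ Set.Icc (0 : ℝ) tf,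
      xstar t = x0 + ∫ τ in (0 : ℝ)..t, f (xstar τ) (sstar τ))
    -- optimality: every admissible trajectory from x₀ has no smaller terminal cost
    (hopt : ∀ (s : ℝ → (Fin M → ℝ)) (x : ℝ → (Fin N → ℝ)),
      Measurable s → (∀ t ∈ Set.Icc (0 : ℝ) tf, s t ∈ S) →
      x 0 = x0 →
      IntervalIntegrable (fun τ => f (x τ) (s τ)) volume 0 tf →
      (∀ t ∈ Set.Icc (0 : ℝ) tf, x t = x0 + ∫ τ in (0 : ℝ)..t, f (x τ) (s τ)) →
      φ (xstar tf) ≤ φ (x tf))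
    -- the co-state: absolutely continuous, satisfying the adjoint equation a.e.
    (p q : ℝ → (Fin N → ℝ))
    (hqint : IntervalIntegrable q volume 0 tf)
    (hpsol : ∀ t ∈ Set.Icc (0 : ℝ) tf, p t = p 0 + ∫ τ in (0 : ℝ)..t, q τ)
    (hadj : ∀ᵐ t ∂(volume.restrict (Set.Icc (0 : ℝ) tf)),
      ∀ w : Fin N → ℝ,
        ∑ i, q t i * w i = -∑ i, p t i * (fderiv ℝ (fun y => f y (sstar t)) (xstar t)) w i)
    -- terminal condition p(tf) = −∇φ(x*(tf))
    (hptf : ∀ i, p tf i = -(fderiv ℝ φ (xstar tf)) (Pi.single i 1))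
    -- the PMP control Hamiltonian is a.e. constant, equal to λ
    (lam : ℝ)
    (hlam : ∀ᵐ t ∂(volume.restrict (Set.Icc (0 : ℝ) tf)),
      ∑ i, p t i * f (xstar t) (sstar t) i = lam)
    -- existence of a fixed point of the dynamics among admissible control values
    (s0 : Fin M → ℝ) (hs0 : s0 ∈ S) (hf0 : f x0 s0 = 0) :
    0 ≤ lam := by
  classical
  set g : ℝ → (Fin N → ℝ) := fun τ => f (xstar τ) (sstar τ) with hg_def
  have huIcc : Set.uIcc (0 : ℝ) tf = Set.Icc 0 tf := Set.uIcc_of_le htf.le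
  -- continuity of x* on [0, tf]
  have hxcont : ContinuousOn xstar (Set.Icc 0 tf) := by
    have h1 : ContinuousOn (fun t => x0 + ∫ τ in (0 : ℝ)..t, g τ) (Set.Icc 0 tf) := by
      apply continuousOn_const.add
      have := intervalIntegral.continuousOn_primitive_interval'
        (μ := volume) (b₁ := (0:ℝ)) (b₂ := tf) (a := 0) hxint
        (by rw [huIcc]; exact ⟨le_rfl, htf.le⟩)
      rwa [huIcc] at this
    exact ContinuousOn.congr h1 hxsol
  -- a uniform bound on the velocity along the optimal trajectory
  obtain ⟨C0, hC0⟩ : ∃ C0, ∀ pr ∈ (xstar '' Set.Icc 0 tf) ×ˢ S,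
      ‖f pr.1 pr.2‖ ≤ C0 :=
    ((isCompact_Icc.image_of_continuousOn hxcont).prod hS).exists_bound_of_continuousOn
      hf.continuous.continuousOn
  set C : ℝ := max C0 1 with hC_def
  have hC1 : (1 : ℝ) ≤ C := le_max_right _ _
  have hCpos : (0 : ℝ) < C := lt_of_lt_of_le one_pos hC1
  have hgC : ∀ τ ∈ Set.Icc (0 : ℝ) tf, ‖g τ‖ ≤ C := by
    intro τ hτ
    exact le_trans (hC0 (xstar τ, sstar τ) ⟨Set.mem_image_of_mem _ hτ, hsval τ hτ⟩)
      (le_max_left _ _)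
  -- continuity of p on [0, tf]
  have hpcont : ContinuousOn p (Set.Icc 0 tf) := by
    have h1 : ContinuousOn (fun t => p 0 + ∫ τ in (0 : ℝ)..t, q τ) (Set.Icc 0 tf) := by
      apply continuousOn_const.add
      have := intervalIntegral.continuousOn_primitive_interval'
        (μ := volume) (b₁ := (0:ℝ)) (b₂ := tf) (a := 0) hqint
        (by rw [huIcc]; exact ⟨le_rfl, htf.le⟩)
      rwa [huIcc] at this
    exact ContinuousOn.congr h1 hpsol
  -- delayed trajectories are admissible, hence φ(x*(tf)) ≤ φ(x*(tf - δ))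
  have hdelay : ∀ δ : ℝ, 0 < δ → δ ≤ tf → φ (xstar tf) ≤ φ (xstar (tf - δ)) := by
    intro δ hδ hδtf
    set s' : ℝ → (Fin M → ℝ) := fun t => if t ≤ δ then s0 else sstar (t - δ) with hs'_def
    set x' : ℝ → (Fin N → ℝ) := fun t => if t ≤ δ then x0 else xstar (t - δ) with hx'_def
    have hfx' : (fun τ => f (x' τ) (s' τ)) = fun τ => if τ ≤ δ then 0 else g (τ - δ) := by
      funext τ
      simp only [hs'_def, hx'_def]
      by_cases h : τ ≤ δ
      · simp [h, hf0]
      · simp [h, hg_def]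
    have hint1 : ∀ t : ℝ, 0 ≤ t → t ≤ δ →
        IntervalIntegrable (fun τ => if τ ≤ δ then 0 else g (τ - δ)) volume 0 t := by
      intro t ht0 htδ
      rw [intervalIntegrable_iff]
      refine IntegrableOn.congr_fun (integrableOn_zero) ?_ measurableSet_uIoc
      intro τ hτ
      rw [Set.uIoc_of_le ht0] at hτ
      simp [if_pos (le_trans hτ.2 htδ)]
    have hint2 : ∀ t : ℝ, δ ≤ t → t ≤ tf →
        IntervalIntegrable (fun τ => if τ ≤ δ then 0 else g (τ - δ)) volume δ t := by
      intro t htδ httf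
      have hsub : IntervalIntegrable g volume 0 (t - δ) := by
        apply hxint.mono_set
        rw [huIcc, Set.uIcc_of_le (by linarith : (0:ℝ) ≤ t - δ)]
        exact Set.Icc_subset_Icc le_rfl (by linarith)
      have h2 : IntervalIntegrable (fun τ => g (τ - δ)) volume δ t := by
        have := hsub.comp_sub_right δ
        simpa using this
      rw [intervalIntegrable_iff] at h2 ⊢
      refine h2.congr_fun ?_ measurableSet_uIoc
      intro τ hτ
      rw [Set.uIoc_of_le htδ] at hτ
      simp [if_neg (not_le.mpr hτ.1)]
    have hintval : ∀ t : ℝ, δ ≤ t → t ≤ tf →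
        (∫ τ in (0:ℝ)..t, if τ ≤ δ then 0 else g (τ - δ)) = xstar (t - δ) - x0 := by
      intro t htδ httf
      have e1 : (∫ τ in (0:ℝ)..δ, if τ ≤ δ then 0 else g (τ - δ)) = 0 := by
        rw [intervalIntegral.integral_congr (g := fun _ => (0 : Fin N → ℝ))]
        · simp
        · intro τ hτ
          rw [Set.uIcc_of_le hδ.le] at hτ
          simp [if_pos hτ.2]
      have e2 : (∫ τ in δ..t, if τ ≤ δ then 0 else g (τ - δ)) = ∫ τ in δ..t, g (τ - δ) := by
        apply intervalIntegral.integral_congr_ae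
        filter_upwards with τ hτ
        rw [Set.uIoc_of_le htδ] at hτ
        simp [if_neg (not_le.mpr hτ.1)]
      have e3 : (∫ τ in δ..t, g (τ - δ)) = ∫ τ in (0:ℝ)..(t - δ), g τ := by
        have := intervalIntegral.integral_comp_sub_right (a := δ) (b := t) (f := g) δ
        simpa using this
      have e4 : (∫ τ in (0:ℝ)..(t - δ), g τ) = xstar (t - δ) - x0 := by
        rw [hxsol (t - δ) ⟨by linarith, by linarith⟩]
        rw [add_sub_cancel_left]
      rw [← intervalIntegral.integral_add_adjacent_intervals (hint1 δ hδ.le le_rfl)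
        (hint2 t htδ httf), e1, e2, e3, e4, zero_add]
    have key := hopt s' x' ?_ ?_ ?_ ?_ ?_
    · have hx'tf : x' tf = xstar (tf - δ) := by
        simp only [hx'_def]
        by_cases h : tf ≤ δ
        · have hδeq : δ = tf := le_antisymm hδtf h
          simp [if_pos h, hδeq, hx0]
        · simp [if_neg h]
      rwa [hx'tf] at key
    · exact Measurable.ite measurableSet_Iic measurable_const
        (hsmeas.comp (measurable_id.sub measurable_const))
    · intro t ht
      simp only [hs'_def]
      by_cases h : t ≤ δ
      · simpa [if_pos h] using hs0
      · have : t - δ ∈ Set.Icc (0:ℝ) tf := ⟨by linarith [not_le.mp h], by linarith [ht.2]⟩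
        simpa [if_neg h] using hsval _ this
    · simp [hx'_def, if_pos hδ.le]
    · rw [hfx']
      exact (hint1 δ hδ.le le_rfl).trans (hint2 tf hδtf le_rfl)
    · intro t ht
      simp only [hfx']
      by_cases h : t ≤ δ
      · have ez : (∫ τ in (0:ℝ)..t, if τ ≤ δ then 0 else g (τ - δ)) = 0 := by
          rw [intervalIntegral.integral_congr (g := fun _ => (0 : Fin N → ℝ))]
          · simp
          · intro τ hτ
            rw [Set.uIcc_of_le ht.1] at hτ
            simp [if_pos (le_trans hτ.2 h)]
        simp [hx'_def, if_pos h, ez]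
      · have h' : δ ≤ t := (not_le.mp h).le
        rw [hintval t h' ht.2]
        simp [hx'_def, if_neg h]
  -- the derivative of φ at x*(tf), expressed through p(tf)
  set D : (Fin N → ℝ) →L[ℝ] ℝ := fderiv ℝ φ (xstar tf) with hD_def
  have hDsingle : ∀ i, D (Pi.single i 1) = -(p tf i) := by
    intro i; rw [hptf i]; ring
  have hDv : ∀ v : Fin N → ℝ, D v = -∑ i, p tf i * v i := by
    intro v
    have hv : v = ∑ i, v i • (Pi.single i 1 : Fin N → ℝ) := by
      funext j
      simp [Finset.sum_apply, Pi.single_apply, mul_ite, Finset.sum_ite_eq]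
    conv_lhs => rw [hv]
    rw [map_sum, ← Finset.sum_neg_distrib]
    apply Finset.sum_congr rfl
    intro i _
    rw [ContinuousLinearMap.map_smul, smul_eq_mul, hDsingle i]
    ring
  -- the linear functional v ↦ ∑ᵢ p(tf)ᵢ vᵢ as a continuous linear map
  set L : (Fin N → ℝ) →L[ℝ] ℝ :=
    ∑ i, p tf i • (ContinuousLinearMap.proj i : (Fin N → ℝ) →L[ℝ] ℝ) with hL_def
  have hLv : ∀ v : Fin N → ℝ, L v = ∑ i, p tf i * v i := by
    intro v
    simp [hL_def, ContinuousLinearMap.sum_apply]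
  have hDL : ∀ v, D v = -(L v) := fun v => by rw [hDv v, hLv v]
  -- main estimate: λ ≥ -ε for every ε > 0
  have hmain : ∀ ε : ℝ, 0 < ε → -ε ≤ lam := by
    intro ε hε
    set ε1 : ℝ := ε / (2 * C) with hε1_def
    have hε1 : 0 < ε1 := by rw [hε1_def]; positivity
    set ε2 : ℝ := ε / (2 * (N + 1) * C) with hε2_def
    have hε2 : 0 < ε2 := by rw [hε2_def]; positivity
    -- little-o estimate for φ at x*(tf)
    have hDf : HasFDerivAt φ D (xstar tf) :=
      (hφ.differentiable one_ne_zero).differentiableAt.hasFDerivAt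
    have hlo := Asymptotics.isLittleO_iff.mp hDf.isLittleO hε1
    rw [Metric.eventually_nhds_iff] at hlo
    obtain ⟨ρ1, hρ1, hball⟩ := hlo
    -- continuity of p at tf within [0, tf]
    have hptfc : ContinuousWithinAt p (Set.Icc 0 tf) tf := hpcont tf ⟨htf.le, le_rfl⟩
    rw [Metric.continuousWithinAt_iff] at hptfc
    obtain ⟨ρ2, hρ2, hpball⟩ := hptfc ε2 hε2
    -- choice of δ
    set δ : ℝ := min (min (tf/2) (ρ1/(2*C))) (ρ2/2) with hδ_def
    have hδpos : 0 < δ := by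
      rw [hδ_def]
      exact lt_min (lt_min (by linarith) (by positivity)) (by positivity)
    have hδtf : δ ≤ tf := by
      have := min_le_left (min (tf/2) (ρ1/(2*C))) (ρ2/2)
      have := min_le_left (tf/2) (ρ1/(2*C))
      rw [hδ_def]
      calc min (min (tf/2) (ρ1/(2*C))) (ρ2/2) ≤ min (tf/2) (ρ1/(2*C)) := min_le_left _ _
        _ ≤ tf/2 := min_le_left _ _
        _ ≤ tf := by linarith
    have hδρ1 : C * δ < ρ1 := by
      have h1 : δ ≤ ρ1/(2*C) := by
        rw [hδ_def]
        exact le_trans (min_le_left _ _) (min_le_right _ _)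
      have h2 : C * δ ≤ C * (ρ1/(2*C)) := by nlinarith
      have h3 : C * (ρ1/(2*C)) = ρ1/2 := by field_simp
      linarith
    have hδρ2 : δ < ρ2 := by
      have : δ ≤ ρ2/2 := by rw [hδ_def]; exact min_le_right _ _
      linarith
    set a : ℝ := tf - δ with ha_def
    have haIcc : a ∈ Set.Icc (0:ℝ) tf := ⟨by rw [ha_def]; linarith, by rw [ha_def]; linarith⟩
    have hatf : a ≤ tf := haIcc.2
    have hIoc_sub : Set.uIoc a tf ⊆ Set.Icc (0:ℝ) tf := by
      rw [Set.uIoc_of_le hatf]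
      exact fun x hx => ⟨le_of_lt (lt_of_le_of_lt haIcc.1 hx.1), hx.2⟩
    have hint_w : IntervalIntegrable g volume a tf := by
      apply hxint.mono_set
      rw [huIcc, Set.uIcc_of_le hatf]
      exact Set.Icc_subset_Icc haIcc.1 le_rfl
    have h3 : IntervalIntegrable g volume 0 a := by
      apply hxint.mono_set
      rw [huIcc, Set.uIcc_of_le haIcc.1]
      exact Set.Icc_subset_Icc le_rfl haIcc.2
    -- the increment of x* as an integral
    have hΔ : xstar tf - xstar a = ∫ τ in a..tf, g τ := by
      have h1 := hxsol tf ⟨htf.le, le_rfl⟩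
      have h2 := hxsol a haIcc
      calc xstar tf - xstar a
          = (x0 + ∫ τ in (0:ℝ)..tf, g τ) - (x0 + ∫ τ in (0:ℝ)..a, g τ) := by rw [← h1, ← h2]
        _ = (∫ τ in (0:ℝ)..tf, g τ) - ∫ τ in (0:ℝ)..a, g τ := by abel
        _ = ∫ τ in a..tf, g τ := intervalIntegral.integral_interval_sub_left hxint h3
    have habs : |tf - a| = δ := by
      rw [ha_def, abs_of_nonneg] <;> [skip; linarith]
      ring
    have hnormΔ : ‖xstar a - xstar tf‖ ≤ C * δ := by
      rw [norm_sub_rev, hΔ]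
      have := intervalIntegral.norm_integral_le_of_norm_le_const
        (C := C) (f := g) (a := a) (b := tf) (fun x hx => hgC x (hIoc_sub hx))
      rw [habs] at this
      exact this
    -- derivative estimate
    have hφest : |φ (xstar a) - φ (xstar tf) - D (xstar a - xstar tf)| ≤ ε1 * (C * δ) := by
      have hdist : dist (xstar a) (xstar tf) < ρ1 := by
        rw [dist_eq_norm]; exact lt_of_le_of_lt hnormΔ hδρ1
      have hb := hball hdist
      have hb' : |φ (xstar a) - φ (xstar tf) - D (xstar a - xstar tf)|
          ≤ ε1 * ‖xstar a - xstar tf‖ := by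
        simpa [Real.norm_eq_abs] using hb
      nlinarith [norm_nonneg (xstar a - xstar tf)]
    -- the derivative applied to the increment is an integral of the Hamiltonian
    have hintL : IntervalIntegrable (fun t => L (g t)) volume a tf := by
      rw [intervalIntegrable_iff] at hint_w ⊢
      exact L.integrable_comp hint_w
    have hDint : D (xstar a - xstar tf) = ∫ t in a..tf, L (g t) := by
      rw [hDL]
      have hneg : L (xstar a - xstar tf) = -(L (xstar tf - xstar a)) := by
        rw [← map_neg]; congr 1; abel
      rw [hneg, neg_neg, hΔ, ← L.intervalIntegral_comp_comm hint_w]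
    -- the Hamiltonian integral is close to λδ
    have hae : ∀ᵐ t ∂volume, t ∈ Set.Icc (0:ℝ) tf →
        ∑ i, p t i * f (xstar t) (sstar t) i = lam :=
      (ae_restrict_iff' measurableSet_Icc).mp hlam
    have hham : |(∫ t in a..tf, L (g t)) - lam * δ| ≤ ((N : ℝ) * ε2 * C) * δ := by
      have hconst : (∫ _t in a..tf, lam) = lam * δ := by
        rw [intervalIntegral.integral_const, smul_eq_mul, ha_def]
        ring
      rw [← hconst, ← intervalIntegral.integral_sub hintL intervalIntegrable_const]
      have hcongr : (∫ t in a..tf, (L (g t) - lam))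
          = ∫ t in a..tf, (∑ i, (p tf i - p t i) * g t i) := by
        apply intervalIntegral.integral_congr_ae
        filter_upwards [hae] with t hlam' ht
        have htIcc : t ∈ Set.Icc (0:ℝ) tf := hIoc_sub ht
        have hlam'' : ∑ i, p t i * g t i = lam := hlam' htIcc
        rw [hLv, ← hlam'', ← Finset.sum_sub_distrib]
        apply Finset.sum_congr rfl
        intro i _
        ring
      rw [hcongr]
      have hb := intervalIntegral.norm_integral_le_of_norm_le_const
        (C := (N : ℝ) * ε2 * C) (f := fun t => ∑ i, (p tf i - p t i) * g t i)
        (a := a) (b := tf) ?_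
      · rw [habs] at hb
        simpa [Real.norm_eq_abs] using hb
      · intro t ht
        have htIcc : t ∈ Set.Icc (0:ℝ) tf := hIoc_sub ht
        have hdist : dist t tf < ρ2 := by
          rw [Set.uIoc_of_le hatf] at ht
          rw [Real.dist_eq, abs_of_nonpos (by linarith [htIcc.2])]
          have : a < t := ht.1
          rw [ha_def] at this
          linarith
        have hp2 := hpball htIcc hdist
        rw [Real.norm_eq_abs]
        calc |∑ i, (p tf i - p t i) * g t i|
            ≤ ∑ i, |(p tf i - p t i) * g t i| := Finset.abs_sum_le_sum_abs _ _
          _ ≤ ∑ _i : Fin N, ε2 * C := by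
              apply Finset.sum_le_sum
              intro i _
              rw [abs_mul]
              have h1 : |p tf i - p t i| ≤ dist (p t) (p tf) := by
                rw [dist_comm, dist_eq_norm]
                have := norm_le_pi_norm (p tf - p t) i
                simpa [Real.norm_eq_abs] using this
              have h2 : |g t i| ≤ C :=
                le_trans (by simpa using norm_le_pi_norm (g t) i) (hgC t htIcc)
              nlinarith [abs_nonneg (p tf i - p t i), abs_nonneg (g t i), hp2.le]
          _ = (N : ℝ) * ε2 * C := by
              rw [Finset.sum_const, Finset.card_univ, Fintype.card_fin, nsmul_eq_mul]
              ring
    -- combine the estimates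
    have hkey := hdelay δ hδpos hδtf
    rw [← ha_def] at hkey
    have e1 : φ (xstar a) - φ (xstar tf) ≤ D (xstar a - xstar tf) + ε1 * (C * δ) := by
      have := abs_le.mp hφest
      linarith [this.2]
    have e2 : D (xstar a - xstar tf) ≤ lam * δ + ((N : ℝ) * ε2 * C) * δ := by
      rw [hDint]
      have := abs_le.mp hham
      linarith [this.2]
    have hfinal : (0:ℝ) ≤ lam * δ + ((N : ℝ) * ε2 * C) * δ + ε1 * (C * δ) := by linarith
    have hsum : (0:ℝ) ≤ lam + (N : ℝ) * ε2 * C + ε1 * C := by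
      have hexp : (lam + (N : ℝ) * ε2 * C + ε1 * C) * δ
          = lam * δ + ((N : ℝ) * ε2 * C) * δ + ε1 * (C * δ) := by ring
      have h'' : (0:ℝ) ≤ (lam + (N : ℝ) * ε2 * C + ε1 * C) * δ := by rw [hexp]; exact hfinal
      exact (mul_nonneg_iff_of_pos_right hδpos).mp h''
    have hε1C : ε1 * C = ε / 2 := by
      rw [hε1_def]; field_simp
    have hε2NC : (N : ℝ) * ε2 * C ≤ ε / 2 := by
      rw [hε2_def]
      have hNpos : (0:ℝ) < (N:ℝ) + 1 := by positivity
      have heq : (N : ℝ) * (ε / (2 * ((N:ℝ) + 1) * C)) * C = ε * (N:ℝ) / (2 * ((N:ℝ) + 1)) := by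
        field_simp
      rw [heq, div_le_div_iff₀ (by positivity) (by norm_num)]
      nlinarith only [hε, (Nat.cast_nonneg N : (0:ℝ) ≤ (N:ℝ))]
    linarith only [hsum, hε2NC, hε1C]
  by_contra hneg
  push_neg at hneg
  have := hmain (-lam/2) (by linarith)
  linarith

end Stmt4
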